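/- arXiv:1610.06345 — 2 statements merged into one kernel-verified Lean document; each statement's English description precedes it below -/
import Mathlib

section
/- For every even natural number n ≥ 2, there exists a family of n − 1 pairwise disjoint perfect matchings on [n] = {1,…,n} (a maximal pairwise disjoint set of matchings, i.e. a 1-factorization of the complete graph on n vertices). -/
/-- A perfect matching on `[n] = {1,…,n}` (modelled as `Fin n`), represented as a
fixed-point-free involution `f`: the pairs of the matching are `{i, f i}`. -/
def IsPerfectMatching (n : ℕ) (f : Fin n → Fin n) : Prop :=
  Function.Involutive f ∧ ∀ i, f i ≠ i

/-- For every even `n ≥ 2` there exists a family of `n - 1` pairwise disjoint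
perfect matchings on `[n]` (a 1-factorization of the complete graph `K_n`).
Two matchings are disjoint when they share no pair, i.e. `M α i ≠ M β i` for all `i`. -/
theorem exists_maximal_pairwise_disjoint_matchings (n : ℕ) (hn : 2 ≤ n) (hev : Even n) :
    ∃ M : Fin (n - 1) → (Fin n → Fin n),
      (∀ α, IsPerfectMatching n (M α)) ∧
      (∀ α β, α ≠ β → ∀ i, M α i ≠ M β i) := by
  set m := n - 1 with hm
  haveI : NeZero m := ⟨by omega⟩
  have hmn : m < n := by omega
  have hmodd : Odd m := by
    rcases hev with ⟨k, hk⟩; exact ⟨k - 1, by omega⟩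
  have hcop : Nat.Coprime 2 m :=
    (Nat.prime_two.coprime_iff_not_dvd).mpr
      (by rcases hmodd with ⟨k, hk⟩; omega)
  have hu : IsUnit (2 : ZMod m) := by
    have := (ZMod.isUnit_iff_coprime 2 m).mpr hcop
    simpa using this
  have cancel2 : ∀ a b : ZMod m, 2 * a = 2 * b → a = b := by
    intro a b h
    rcases hu with ⟨u, hu⟩
    rw [← hu] at h
    exact (Units.mul_right_inj u).mp h
  have castinj : ∀ a b : ℕ, a < m → b < m →
      ((a : ZMod m) = (b : ZMod m)) → a = b := by
    intro a b ha hb h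
    have := congrArg ZMod.val h
    rwa [ZMod.val_cast_of_lt ha, ZMod.val_cast_of_lt hb] at this
  refine ⟨fun r i =>
    if i.val = m then ⟨r.val, lt_trans r.isLt hmn⟩
    else if (i.val : ZMod m) = (r.val : ZMod m) then ⟨m, hmn⟩
    else ⟨(2 * (r.val : ZMod m) - (i.val : ZMod m)).val,
      lt_trans (ZMod.val_lt _) hmn⟩, ?_, ?_⟩
  · intro r
    constructor
    · intro i
      beta_reduce
      by_cases h1 : i.val = m
      · rw [if_pos h1]
        have hr : r.val ≠ m := Nat.ne_of_lt r.isLt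
        rw [if_neg hr, if_pos rfl]
        exact Fin.ext h1.symm
      · rw [if_neg h1]
        by_cases h2 : (i.val : ZMod m) = (r.val : ZMod m)
        · rw [if_pos h2, if_pos rfl]
          exact Fin.ext (castinj _ _ r.isLt (by omega) h2.symm)
        · rw [if_neg h2]
          set x : ZMod m := 2 * (r.val : ZMod m) - (i.val : ZMod m) with hx
          have hxv : ((x.val : ℕ) : ZMod m) = x := ZMod.natCast_zmod_val x
          have hxm : x.val ≠ m := Nat.ne_of_lt (ZMod.val_lt x)
          rw [if_neg hxm]
          have hxr : ((x.val : ℕ) : ZMod m) ≠ ((r.val : ℕ) : ZMod m) := by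
            rw [hxv, hx]
            intro h
            apply h2
            linear_combination -h
          rw [if_neg hxr]
          apply Fin.ext
          show (2 * (r.val : ZMod m) - ((x.val : ℕ) : ZMod m)).val = i.val
          have : 2 * (r.val : ZMod m) - ((x.val : ℕ) : ZMod m) = (i.val : ZMod m) := by
            rw [hxv, hx]; ring
          rw [this, ZMod.val_cast_of_lt (show i.val < m by omega)]
    · intro i
      beta_reduce
      by_cases h1 : i.val = m
      · rw [if_pos h1]
        intro h
        have := congrArg Fin.val h
        simp only at this
        omega
      · rw [if_neg h1]
        by_cases h2 : (i.val : ZMod m) = (r.val : ZMod m)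
        · rw [if_pos h2]
          intro h
          have := congrArg Fin.val h
          simp only at this
          omega
        · rw [if_neg h2]
          intro h
          apply h2
          have hval := congrArg Fin.val h
          simp only at hval
          have hiv : i.val < m := by omega
          have : (2 * (r.val : ZMod m) - (i.val : ZMod m))
              = ((i.val : ℕ) : ZMod m) := by
            rw [← ZMod.natCast_zmod_val (2 * (r.val : ZMod m) - (i.val : ZMod m)),
              hval]
          have h2i : 2 * (i.val : ZMod m) = 2 * (r.val : ZMod m) := by
            linear_combination -this
          exact (cancel2 _ _ h2i.symm).symm
  · intro α β hab i
    beta_reduce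
    by_cases h1 : i.val = m
    · rw [if_pos h1, if_pos h1]
      intro h
      have := congrArg Fin.val h
      simp only at this
      exact hab (Fin.ext this)
    · rw [if_neg h1, if_neg h1]
      by_cases h2 : (i.val : ZMod m) = (α.val : ZMod m)
      · by_cases h3 : (i.val : ZMod m) = (β.val : ZMod m)
        · exact absurd (Fin.ext (castinj _ _ α.isLt β.isLt (h2.symm.trans h3))) hab
        · rw [if_pos h2, if_neg h3]
          intro h
          have := congrArg Fin.val h
          simp only at this
          have := ZMod.val_lt (2 * (β.val : ZMod m) - (i.val : ZMod m))
          omega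
      · by_cases h3 : (i.val : ZMod m) = (β.val : ZMod m)
        · rw [if_neg h2, if_pos h3]
          intro h
          have := congrArg Fin.val h
          simp only at this
          have := ZMod.val_lt (2 * (α.val : ZMod m) - (i.val : ZMod m))
          omega
        · rw [if_neg h2, if_neg h3]
          intro h
          apply hab
          have hval := congrArg Fin.val h
          simp only at hval
          have heq : (2 * (α.val : ZMod m) - (i.val : ZMod m))
              = (2 * (β.val : ZMod m) - (i.val : ZMod m)) := by
            rw [← ZMod.natCast_zmod_val (2 * (α.val : ZMod m) - (i.val : ZMod m)),
              hval, ZMod.natCast_zmod_val]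
          have h2ab : 2 * (α.val : ZMod m) = 2 * (β.val : ZMod m) := by
            linear_combination heq
          exact Fin.ext (castinj _ _ α.isLt β.isLt (cancel2 _ _ h2ab))
end

section
/- Let n ≥ 2 be even, x ∈ {0,1}^n, and let M_1, …, M_{n−1} be pairwise disjoint perfect matchings on [n]. Then (1/(n−1)) Σ_{α=1}^{n−1} E^{inc,x}_{M_α} = (n/(2(n−1))) (I_n − |φ_x⟩⟨φ_x|) and (1/(n−1)) Σ_{α=1}^{n−1} E^{cor,x}_{M_α} = (n/(2(n−1))) (((n−2)/n) I_n + |φ_x⟩⟨φ_x|). -/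
open Matrix

/-- The hidden matching state `|φ_x⟩ = (1/√n) Σ_i (−1)^{x_i} |i⟩` in `ℂ^n`. -/
noncomputable def phi (n : ℕ) (x : Fin n → Bool) : Fin n → ℂ :=
  fun i => (if x i then -1 else 1) / (Real.sqrt n : ℂ)

/-- `(−1)^{x_i ⊕ x_j}` as a complex number. -/
def eps (n : ℕ) (x : Fin n → Bool) (i j : Fin n) : ℂ :=
  if x i = x j then 1 else -1

/-- The incorrect-outcome vector `|ψ^x_{ij}⟩ = (1/√2)(|i⟩ − (−1)^{x_i⊕x_j}|j⟩)`. -/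
noncomputable def psi (n : ℕ) (x : Fin n → Bool) (i j : Fin n) : Fin n → ℂ :=
  fun k => ((if k = i then 1 else 0) - eps n x i j * (if k = j then 1 else 0)) /
    (Real.sqrt 2 : ℂ)

/-- The correct-outcome vector `|χ^x_{ij}⟩ = (1/√2)(|i⟩ + (−1)^{x_i⊕x_j}|j⟩)`. -/
noncomputable def chi (n : ℕ) (x : Fin n → Bool) (i j : Fin n) : Fin n → ℂ :=
  fun k => ((if k = i then 1 else 0) + eps n x i j * (if k = j then 1 else 0)) /
    (Real.sqrt 2 : ℂ)

/-- The outer product `|u⟩⟨u|` as an `n × n` matrix. -/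
noncomputable def outer {n : ℕ} (u : Fin n → ℂ) : Matrix (Fin n) (Fin n) ℂ :=
  Matrix.vecMulVec u (star u)

/-- The incorrect-outcome projector `E^{inc,x}_M`, summed over the pairs of the
matching `f`, each represented once by its smaller endpoint. -/
noncomputable def Einc (n : ℕ) (x : Fin n → Bool) (f : Fin n → Fin n) :
    Matrix (Fin n) (Fin n) ℂ :=
  ∑ i ∈ Finset.univ.filter (fun i => i < f i), outer (psi n x i (f i))

/-- The correct-outcome projector `E^{cor,x}_M`, summed over the pairs of the
matching `f`, each represented once by its smaller endpoint. -/
noncomputable def Ecor (n : ℕ) (x : Fin n → Bool) (f : Fin n → Fin n) :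
    Matrix (Fin n) (Fin n) ℂ :=
  ∑ i ∈ Finset.univ.filter (fun i => i < f i), outer (chi n x i (f i))

lemma eps_self (n : ℕ) (x : Fin n → Bool) (i : Fin n) : eps n x i i = 1 := by simp [eps]

lemma eps_symm (n : ℕ) (x : Fin n → Bool) (i j : Fin n) : eps n x i j = eps n x j i := by
  unfold eps
  by_cases h : x i = x j
  · rw [if_pos h, if_pos h.symm]
  · rw [if_neg h, if_neg (fun hh => h hh.symm)]

lemma eps_sq (n : ℕ) (x : Fin n → Bool) (i j : Fin n) :
    eps n x i j * eps n x i j = 1 := by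
  unfold eps; split_ifs <;> ring

lemma eps_conj (n : ℕ) (x : Fin n → Bool) (i j : Fin n) :
    (starRingEnd ℂ) (eps n x i j) = eps n x i j := by
  unfold eps; split_ifs <;> simp

lemma outer_apply {n : ℕ} (u : Fin n → ℂ) (k l : Fin n) :
    outer u k l = u k * (starRingEnd ℂ) (u l) := rfl

lemma sqrt_two_sq : (Real.sqrt 2 : ℂ) * (Real.sqrt 2 : ℂ) = 2 := by
  rw [← Complex.ofReal_mul, Real.mul_self_sqrt (by norm_num)]; norm_num

lemma outer_psi_apply (n : ℕ) (x : Fin n → Bool) (i j k l : Fin n) :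
    outer (psi n x i j) k l =
      ((if k = i then 1 else 0) - eps n x i j * (if k = j then 1 else 0)) *
      ((if l = i then 1 else 0) - eps n x i j * (if l = j then 1 else 0)) / 2 := by
  rw [outer_apply]
  show (((if k = i then (1:ℂ) else 0) - eps n x i j * (if k = j then 1 else 0)) /
      (Real.sqrt 2 : ℂ)) * (starRingEnd ℂ)
      (((if l = i then (1:ℂ) else 0) - eps n x i j * (if l = j then 1 else 0)) /
      (Real.sqrt 2 : ℂ)) = _
  rw [map_div₀, map_sub, _root_.map_mul, eps_conj, Complex.conj_ofReal]
  simp only [apply_ite (starRingEnd ℂ), _root_.map_one, map_zero]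
  rw [div_mul_div_comm, sqrt_two_sq]

lemma outer_chi_apply (n : ℕ) (x : Fin n → Bool) (i j k l : Fin n) :
    outer (chi n x i j) k l =
      ((if k = i then 1 else 0) + eps n x i j * (if k = j then 1 else 0)) *
      ((if l = i then 1 else 0) + eps n x i j * (if l = j then 1 else 0)) / 2 := by
  rw [outer_apply]
  show (((if k = i then (1:ℂ) else 0) + eps n x i j * (if k = j then 1 else 0)) /
      (Real.sqrt 2 : ℂ)) * (starRingEnd ℂ)
      (((if l = i then (1:ℂ) else 0) + eps n x i j * (if l = j then 1 else 0)) /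
      (Real.sqrt 2 : ℂ)) = _
  rw [map_div₀, map_add, _root_.map_mul, eps_conj, Complex.conj_ofReal]
  simp only [apply_ite (starRingEnd ℂ), _root_.map_one, map_zero]
  rw [div_mul_div_comm, sqrt_two_sq]

lemma outer_phi_apply (n : ℕ) (x : Fin n → Bool) (k l : Fin n) :
    outer (phi n x) k l = eps n x k l / n := by
  rw [outer_apply]
  show ((if x k then (-1:ℂ) else 1) / (Real.sqrt n : ℂ)) * (starRingEnd ℂ)
      ((if x l then (-1:ℂ) else 1) / (Real.sqrt n : ℂ)) = _
  rw [map_div₀, Complex.conj_ofReal]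
  simp only [apply_ite (starRingEnd ℂ), _root_.map_one, map_neg]
  rw [div_mul_div_comm, ← Complex.ofReal_mul, Real.mul_self_sqrt (Nat.cast_nonneg n),
    Complex.ofReal_natCast]
  congr 1
  unfold eps
  cases hk : x k <;> cases hl : x l <;> simp

lemma Einc_apply (n : ℕ) (x : Fin n → Bool) (f : Fin n → Fin n)
    (hf : Function.Involutive f) (hfp : ∀ i, f i ≠ i) (k l : Fin n) :
    Einc n x f k l =
      (if k = l then (1:ℂ) else 0) / 2 - (if f k = l then eps n x k l else 0) / 2 := by
  unfold Einc
  rw [Matrix.sum_apply]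
  have hkfk : ¬ k = f k := fun h => hfp k h.symm
  rcases (hfp k).lt_or_gt with hgt | hlt
  · -- f k < k, representative is f k
    rw [Finset.sum_eq_single_of_mem (f k)
        (by simp only [Finset.mem_filter, Finset.mem_univ, true_and, hf k]; exact hgt)]
    · rw [hf k, outer_psi_apply]
      by_cases hl1 : l = k
      · subst hl1
        rw [if_neg (fun h : l = f l => hfp l h.symm), if_pos rfl, if_neg (hfp l)]
        linear_combination (eps_sq n x (f l) l) / 2
      · by_cases hl2 : l = f k
        · subst hl2
          rw [if_neg hkfk, if_pos rfl, if_pos rfl, if_neg (hfp k),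
            eps_symm n x (f k) k]
          simp
          ring
        · rw [if_neg hkfk, if_pos rfl, if_neg hl2, if_neg hl1,
            if_neg (fun h : k = l => hl1 h.symm), if_neg (fun h : f k = l => hl2 h.symm)]
          ring
    · intro b hb hb'
      simp only [Finset.mem_filter, Finset.mem_univ, true_and] at hb
      rw [outer_psi_apply]
      have h1 : ¬ k = b := by
        intro h; subst h; exact absurd hb (not_lt.mpr hgt.le)
      have h2 : ¬ k = f b := fun h => hb' (by rw [h, hf b])
      rw [if_neg h1, if_neg h2]
      ring
  · -- k < f k, representative is k
    rw [Finset.sum_eq_single_of_mem k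
        (by simp only [Finset.mem_filter, Finset.mem_univ, true_and]; exact hlt)]
    · rw [outer_psi_apply]
      by_cases hl1 : l = k
      · subst hl1
        rw [if_pos rfl, if_neg (fun h : l = f l => hfp l h.symm), if_neg (hfp l)]
        ring
      · by_cases hl2 : l = f k
        · subst hl2
          rw [if_pos rfl, if_pos rfl, if_neg hkfk, if_neg (hfp k)]
          simp
          ring
        · rw [if_pos rfl, if_neg hkfk, if_neg hl1, if_neg hl2,
            if_neg (fun h : k = l => hl1 h.symm), if_neg (fun h : f k = l => hl2 h.symm)]
          ring
    · intro b hb hb'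
      simp only [Finset.mem_filter, Finset.mem_univ, true_and] at hb
      rw [outer_psi_apply]
      have h1 : ¬ k = b := fun h => hb' h.symm
      have h2 : ¬ k = f b := by
        intro h
        have hbk : b = f k := by rw [h, hf b]
        subst hbk
        rw [hf k] at hb
        exact absurd hlt (not_lt.mpr hb.le)
      rw [if_neg h1, if_neg h2]
      ring

lemma Ecor_apply (n : ℕ) (x : Fin n → Bool) (f : Fin n → Fin n)
    (hf : Function.Involutive f) (hfp : ∀ i, f i ≠ i) (k l : Fin n) :
    Ecor n x f k l =
      (if k = l then (1:ℂ) else 0) / 2 + (if f k = l then eps n x k l else 0) / 2 := by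
  unfold Ecor
  rw [Matrix.sum_apply]
  have hkfk : ¬ k = f k := fun h => hfp k h.symm
  rcases (hfp k).lt_or_gt with hgt | hlt
  · rw [Finset.sum_eq_single_of_mem (f k)
        (by simp only [Finset.mem_filter, Finset.mem_univ, true_and, hf k]; exact hgt)]
    · rw [hf k, outer_chi_apply]
      by_cases hl1 : l = k
      · subst hl1
        rw [if_neg (fun h : l = f l => hfp l h.symm), if_pos rfl, if_neg (hfp l)]
        linear_combination (eps_sq n x (f l) l) / 2
      · by_cases hl2 : l = f k
        · subst hl2
          rw [if_neg hkfk, if_pos rfl, if_pos rfl, if_neg (hfp k),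
            eps_symm n x (f k) k]
          simp
        · rw [if_neg hkfk, if_pos rfl, if_neg hl2, if_neg hl1,
            if_neg (fun h : k = l => hl1 h.symm), if_neg (fun h : f k = l => hl2 h.symm)]
          ring
    · intro b hb hb'
      simp only [Finset.mem_filter, Finset.mem_univ, true_and] at hb
      rw [outer_chi_apply]
      have h1 : ¬ k = b := by
        intro h; subst h; exact absurd hb (not_lt.mpr hgt.le)
      have h2 : ¬ k = f b := fun h => hb' (by rw [h, hf b])
      rw [if_neg h1, if_neg h2]
      ring
  · rw [Finset.sum_eq_single_of_mem k
        (by simp only [Finset.mem_filter, Finset.mem_univ, true_and]; exact hlt)]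
    · rw [outer_chi_apply]
      by_cases hl1 : l = k
      · subst hl1
        rw [if_pos rfl, if_neg (fun h : l = f l => hfp l h.symm), if_neg (hfp l)]
        ring
      · by_cases hl2 : l = f k
        · subst hl2
          rw [if_pos rfl, if_pos rfl, if_neg hkfk, if_neg (hfp k)]
          simp
        · rw [if_pos rfl, if_neg hkfk, if_neg hl1, if_neg hl2,
            if_neg (fun h : k = l => hl1 h.symm), if_neg (fun h : f k = l => hl2 h.symm)]
          ring
    · intro b hb hb'
      simp only [Finset.mem_filter, Finset.mem_univ, true_and] at hb
      rw [outer_chi_apply]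
      have h1 : ¬ k = b := fun h => hb' h.symm
      have h2 : ¬ k = f b := by
        intro h
        have hbk : b = f k := by rw [h, hf b]
        subst hbk
        rw [hf k] at hb
        exact absurd hlt (not_lt.mpr hb.le)
      rw [if_neg h1, if_neg h2]
      ring

lemma sum_if_unique (n : ℕ) (M : Fin (n - 1) → (Fin n → Fin n))
    (hpm : ∀ α, IsPerfectMatching n (M α))
    (hdisj : ∀ α β, α ≠ β → ∀ i, M α i ≠ M β i)
    (k l : Fin n) (c : ℂ) :
    ∑ α : Fin (n - 1), (if M α k = l then c else 0) = if k = l then 0 else c := by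
  by_cases hkl : k = l
  · subst hkl
    rw [if_pos rfl]
    exact Finset.sum_eq_zero (fun α _ => if_neg ((hpm α).2 k))
  · rw [if_neg hkl]
    have hinj : Function.Injective (fun α => M α k) := by
      intro α β h
      by_contra hne
      exact hdisj α β hne k h
    have himg : Finset.image (fun α => M α k) Finset.univ = Finset.univ.erase k := by
      apply Finset.eq_of_subset_of_card_le
      · intro m hm
        simp only [Finset.mem_image, Finset.mem_univ, true_and] at hm
        obtain ⟨α, rfl⟩ := hm
        exact Finset.mem_erase.mpr ⟨(hpm α).2 k, Finset.mem_univ _⟩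
      · rw [Finset.card_erase_of_mem (Finset.mem_univ k),
          Finset.card_image_of_injective _ hinj]
        simp
    have hl : l ∈ Finset.image (fun α => M α k) Finset.univ := by
      rw [himg]
      exact Finset.mem_erase.mpr ⟨fun h => hkl h.symm, Finset.mem_univ l⟩
    obtain ⟨α₀, _, hα₀⟩ := Finset.mem_image.mp hl
    rw [Finset.sum_eq_single_of_mem α₀ (Finset.mem_univ _)]
    · rw [if_pos hα₀]
    · intro β _ hβ
      rw [if_neg]
      intro h
      exact hβ (hinj (h.trans hα₀.symm))

/-- For even `n ≥ 2`, `x ∈ {0,1}^n` and pairwise disjoint perfect matchings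
`M_1, …, M_{n-1}` on `[n]`:
`(1/(n−1)) Σ_α E^{inc,x}_{M_α} = (n/(2(n−1))) (I_n − |φ_x⟩⟨φ_x|)` and
`(1/(n−1)) Σ_α E^{cor,x}_{M_α} = (n/(2(n−1))) (((n−2)/n) I_n + |φ_x⟩⟨φ_x|)`. -/
theorem averaged_projectors (n : ℕ) (hn : 2 ≤ n) (hev : Even n) (x : Fin n → Bool)
    (M : Fin (n - 1) → (Fin n → Fin n))
    (hpm : ∀ α, IsPerfectMatching n (M α))
    (hdisj : ∀ α β, α ≠ β → ∀ i, M α i ≠ M β i) :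
    ((n : ℂ) - 1)⁻¹ • ∑ α : Fin (n - 1), Einc n x (M α) =
      ((n : ℂ) / (2 * ((n : ℂ) - 1))) •
        ((1 : Matrix (Fin n) (Fin n) ℂ) - outer (phi n x)) ∧
    ((n : ℂ) - 1)⁻¹ • ∑ α : Fin (n - 1), Ecor n x (M α) =
      ((n : ℂ) / (2 * ((n : ℂ) - 1))) •
        ((((n : ℂ) - 2) / (n : ℂ)) • (1 : Matrix (Fin n) (Fin n) ℂ) + outer (phi n x)) := by
  have hc0 : (n : ℂ) ≠ 0 := Nat.cast_ne_zero.mpr (by omega)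
  have hc1 : (n : ℂ) - 1 ≠ 0 := sub_ne_zero.mpr (by exact_mod_cast (by omega : n ≠ 1))
  have hcast : ((n - 1 : ℕ) : ℂ) = (n : ℂ) - 1 := by
    rw [Nat.cast_sub (by omega), Nat.cast_one]
  constructor
  · ext k l
    simp only [Matrix.smul_apply, Matrix.sum_apply, Matrix.sub_apply, Matrix.one_apply,
      smul_eq_mul]
    rw [Finset.sum_congr rfl (fun α _ => Einc_apply n x (M α) (hpm α).1 (hpm α).2 k l),
      Finset.sum_sub_distrib, Finset.sum_const, Finset.card_univ, Fintype.card_fin,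
      ← Finset.sum_div, sum_if_unique n M hpm hdisj k l (eps n x k l),
      outer_phi_apply, nsmul_eq_mul, hcast]
    by_cases hkl : k = l
    · subst hkl
      rw [if_pos rfl, if_pos rfl, eps_self]
      field_simp
      ring
    · rw [if_neg hkl, if_neg hkl]
      field_simp
      ring
  · ext k l
    simp only [Matrix.smul_apply, Matrix.sum_apply, Matrix.add_apply, Matrix.one_apply,
      smul_eq_mul]
    rw [Finset.sum_congr rfl (fun α _ => Ecor_apply n x (M α) (hpm α).1 (hpm α).2 k l),
      Finset.sum_add_distrib, Finset.sum_const, Finset.card_univ, Fintype.card_fin,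
      ← Finset.sum_div, sum_if_unique n M hpm hdisj k l (eps n x k l),
      outer_phi_apply, nsmul_eq_mul, hcast]
    by_cases hkl : k = l
    · subst hkl
      rw [if_pos rfl, if_pos rfl, eps_self]
      field_simp
      ring
    · rw [if_neg hkl, if_neg hkl]
      field_simp
      ring
end
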